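/- Let ι be a type, let τ₁, τ₂ ≥ 0, and let μ₁, μ₂ be probability mass functions on Finset ι that are locally decaying with rates τ₁ and τ₂ respectively. Consider the product distribution μ₁ ⊗ μ₂ on pairs (S₁, S₂) of finite subsets of ι (i.e., S₁ and S₂ are independent). Then for every finite subset B of ι, the probability under μ₁ ⊗ μ₂ of the event {(S₁,S₂) : B ⊆ S₁ ∪ S₂} is at most (τ₁ + τ₂)^{B.card}. In other words, the union of two independent locally decaying random subsets with rates τ₁ and τ₂ is locally decaying with rate τ₁ + τ₂. -/

import Mathlib

open scoped ENNReal

/-- A probability mass function `μ` on finite subsets of `ι` is *locally decaying*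
with rate `τ` if for every finite `B ⊆ ι` the probability that `B` is contained in
the random subset is at most `τ ^ |B|`. -/
def LocallyDecaying {ι : Type*} [DecidableEq ι] (μ : PMF (Finset ι)) (τ : ℝ) : Prop :=
  ∀ B : Finset ι,
    (∑' S : Finset ι, if B ⊆ S then μ S else 0) ≤ ENNReal.ofReal (τ ^ B.card)

/-- **Closure of locally decaying distributions under union (two factors).**
If `S₁ ~ μ₁` and `S₂ ~ μ₂` are independent random finite subsets of `ι`, locally
decaying with rates `τ₁ ≥ 0` and `τ₂ ≥ 0`, then for every finite `B ⊆ ι` the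
probability (under the product distribution) that `B ⊆ S₁ ∪ S₂` is at most
`(τ₁ + τ₂) ^ |B|`; i.e. `S₁ ∪ S₂` is locally decaying with rate `τ₁ + τ₂`. -/
theorem locallyDecaying_union {ι : Type*} [DecidableEq ι] (τ₁ τ₂ : ℝ)
    (hτ₁ : 0 ≤ τ₁) (hτ₂ : 0 ≤ τ₂) (μ₁ μ₂ : PMF (Finset ι))
    (h₁ : LocallyDecaying μ₁ τ₁) (h₂ : LocallyDecaying μ₂ τ₂) :
    ∀ B : Finset ι,
      (∑' S₁ : Finset ι, ∑' S₂ : Finset ι,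
          if B ⊆ S₁ ∪ S₂ then μ₁ S₁ * μ₂ S₂ else 0)
        ≤ ENNReal.ofReal ((τ₁ + τ₂) ^ B.card) := by
  intro B
  set t₁ := ENNReal.ofReal τ₁ with ht₁
  set t₂ := ENNReal.ofReal τ₂ with ht₂
  have key₁ : ∀ A : Finset ι,
      (∑' S : Finset ι, if A ⊆ S then μ₁ S else 0) ≤ t₁ ^ A.card := by
    intro A
    have := h₁ A
    rwa [ENNReal.ofReal_pow hτ₁] at this
  have key₂ : ∀ A : Finset ι,
      (∑' S : Finset ι, if A ⊆ S then μ₂ S else 0) ≤ t₂ ^ A.card := by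
    intro A
    have := h₂ A
    rwa [ENNReal.ofReal_pow hτ₂] at this
  have hgoal : ENNReal.ofReal ((τ₁ + τ₂) ^ B.card) = (t₁ + t₂) ^ B.card := by
    rw [ENNReal.ofReal_pow (by positivity), ENNReal.ofReal_add hτ₁ hτ₂]
  rw [hgoal]
  calc (∑' S₁ : Finset ι, ∑' S₂ : Finset ι,
          if B ⊆ S₁ ∪ S₂ then μ₁ S₁ * μ₂ S₂ else 0)
      ≤ ∑' S₁ : Finset ι, ∑' S₂ : Finset ι, ∑ A ∈ B.powerset,
          (if A ⊆ S₁ then μ₁ S₁ else 0) * (if B \ A ⊆ S₂ then μ₂ S₂ else 0) := by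
        refine ENNReal.tsum_le_tsum fun S₁ => ENNReal.tsum_le_tsum fun S₂ => ?_
        split_ifs with h
        · have hmem : B ∩ S₁ ∈ B.powerset :=
            Finset.mem_powerset.2 Finset.inter_subset_left
          have hle : μ₁ S₁ * μ₂ S₂ ≤
              (if B ∩ S₁ ⊆ S₁ then μ₁ S₁ else 0) *
                (if B \ (B ∩ S₁) ⊆ S₂ then μ₂ S₂ else 0) := by
            rw [if_pos Finset.inter_subset_right, if_pos ?_]
            intro x hx
            rw [Finset.mem_sdiff, Finset.mem_inter] at hx
            rcases hx with ⟨hxB, hxn⟩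
            rcases Finset.mem_union.1 (h hxB) with h1 | h2
            · exact absurd ⟨hxB, h1⟩ hxn
            · exact h2
          exact hle.trans (Finset.single_le_sum (f := fun A => (if A ⊆ S₁ then μ₁ S₁ else 0) * if B \ A ⊆ S₂ then μ₂ S₂ else 0) (fun _ _ => zero_le) hmem)
        · exact zero_le
    _ = ∑ A ∈ B.powerset,
          (∑' S₁ : Finset ι, if A ⊆ S₁ then μ₁ S₁ else 0) *
            (∑' S₂ : Finset ι, if B \ A ⊆ S₂ then μ₂ S₂ else 0) := by
        have e1 : ∀ S₁ : Finset ι,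
            (∑' S₂ : Finset ι, ∑ A ∈ B.powerset,
              (if A ⊆ S₁ then μ₁ S₁ else 0) * (if B \ A ⊆ S₂ then μ₂ S₂ else 0))
            = ∑ A ∈ B.powerset, (if A ⊆ S₁ then μ₁ S₁ else 0) *
                ∑' S₂ : Finset ι, (if B \ A ⊆ S₂ then μ₂ S₂ else 0) := by
          intro S₁
          rw [Summable.tsum_finsetSum (fun _ _ => ENNReal.summable)]
          exact Finset.sum_congr rfl fun A _ => ENNReal.tsum_mul_left
        simp_rw [e1]
        rw [Summable.tsum_finsetSum (fun _ _ => ENNReal.summable)]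
        exact Finset.sum_congr rfl fun A _ => ENNReal.tsum_mul_right
    _ ≤ ∑ A ∈ B.powerset, t₁ ^ A.card * t₂ ^ (B \ A).card :=
        Finset.sum_le_sum fun A _ => mul_le_mul' (key₁ A) (key₂ (B \ A))
    _ = (t₁ + t₂) ^ B.card := by
        have := Finset.prod_add (fun _ : ι => t₁) (fun _ : ι => t₂) B
        simp only [Finset.prod_const] at this
        rw [this]
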